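/- Let H be a finite graph. Call a vertex v good in H if the number of neighbors u of v with deg_H(u) ≤ deg_H(v) is at least deg_H(v)/3. Then at least half of the edges of H are incident on at least one good vertex. -/

import Mathlib

section GoodVertexAux

variable {V : Type*} [DecidableEq V]

/-- The "head" (larger-key endpoint) of an unordered pair. -/
def gvHd (key : V → ℕ) (hinj : Function.Injective key) : Sym2 V → V :=
  Sym2.lift ⟨fun u v => if key u ≤ key v then v else u, by
    intro u v
    by_cases h1 : key u ≤ key v <;> by_cases h2 : key v ≤ key u <;> simp [h1, h2]
    · exact (hinj (le_antisymm h1 h2)).symm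
    · omega⟩

/-- The "tail" (smaller-key endpoint) of an unordered pair. -/
def gvTl (key : V → ℕ) (hinj : Function.Injective key) : Sym2 V → V :=
  Sym2.lift ⟨fun u v => if key u ≤ key v then u else v, by
    intro u v
    by_cases h1 : key u ≤ key v <;> by_cases h2 : key v ≤ key u <;> simp [h1, h2]
    · exact hinj (le_antisymm h1 h2)
    · omega⟩

lemma gv_mk_tl_hd (key : V → ℕ) (hinj : Function.Injective key) (e : Sym2 V) :
    s(gvTl key hinj e, gvHd key hinj e) = e := by
  induction e using Sym2.ind with
  | _ a b =>
    simp only [gvHd, gvTl, Sym2.lift_mk]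
    split <;> simp [Sym2.eq_swap]

lemma gv_key_tl_le (key : V → ℕ) (hinj : Function.Injective key) (e : Sym2 V) :
    key (gvTl key hinj e) ≤ key (gvHd key hinj e) := by
  induction e using Sym2.ind with
  | _ a b =>
    simp only [gvHd, gvTl, Sym2.lift_mk]
    split <;> omega

lemma gv_hd_mem (key : V → ℕ) (hinj : Function.Injective key) (e : Sym2 V) :
    gvHd key hinj e ∈ e := by
  induction e using Sym2.ind with
  | _ a b => simp only [gvHd, Sym2.lift_mk]; split <;> simp

lemma gv_tl_mem (key : V → ℕ) (hinj : Function.Injective key) (e : Sym2 V) :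
    gvTl key hinj e ∈ e := by
  induction e using Sym2.ind with
  | _ a b => simp only [gvTl, Sym2.lift_mk]; split <;> simp

end GoodVertexAux

/-- Good-vertex lemma (Alon–Babai–Itai).  Call a vertex `v` of a finite graph
`H` good if at least a third of its neighbors `u` satisfy
`deg u ≤ deg v`.  Then at least half of the edges of `H` are incident on at
least one good vertex. -/
theorem stmt_6 (V : Type*) [Fintype V] [DecidableEq V]
    (H : SimpleGraph V) [DecidableRel H.Adj] :
    H.edgeSet.ncard ≤
      2 * {e ∈ H.edgeSet | ∃ v, v ∈ e ∧
        H.degree v ≤ 3 * ((H.neighborFinset v).filter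
          (fun u => H.degree u ≤ H.degree v)).card}.ncard := by
  classical
  rcases isEmpty_or_nonempty V with hV | hV
  · have h0 : H.edgeSet = ∅ := Set.eq_empty_of_isEmpty _
    simp [h0]
  -- setup
  set n := Fintype.card V with hn
  have hnpos : 0 < n := Fintype.card_pos
  set rk := Fintype.equivFin V with hrk
  set key : V → ℕ := fun v => n * H.degree v + (rk v : ℕ) with hkey
  have hkeydeg : ∀ {u v : V}, key u ≤ key v → H.degree u ≤ H.degree v := by
    intro u v h
    by_contra hlt
    push_neg at hlt
    have h1 : key v < n * H.degree v + n := by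
      have := (rk v).isLt
      simp only [hkey]
      omega
    have h2 : n * H.degree v + n ≤ n * H.degree u := by
      calc n * H.degree v + n = n * (H.degree v + 1) := (Nat.mul_succ _ _).symm
        _ ≤ n * H.degree u := Nat.mul_le_mul_left n hlt
    have h3 : n * H.degree u ≤ key u := by simp [hkey]
    omega
  have hinj : Function.Injective key := by
    intro u v h
    have hd1 : H.degree u = H.degree v :=
      le_antisymm (hkeydeg h.le) (hkeydeg h.ge)
    have : (rk u : ℕ) = (rk v : ℕ) := by
      simp only [hkey, hd1] at h; omega
    exact rk.injective (Fin.val_injective this)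
  set good : V → Prop := fun v =>
    H.degree v ≤ 3 * ((H.neighborFinset v).filter
      (fun u => H.degree u ≤ H.degree v)).card with hgood
  set P : Sym2 V → Prop := fun e => ∃ v, v ∈ e ∧ good v with hP
  set G := H.edgeFinset.filter P with hG
  set B := H.edgeFinset.filter (fun e => ¬ P e) with hB
  have hGB : G.card + B.card = H.edgeFinset.card :=
    Finset.card_filter_add_card_filter_not _
  set inN : V → Finset V := fun v =>
    (H.neighborFinset v).filter (fun u => key u < key v) with hinN
  set outN : V → Finset V := fun v =>
    (H.neighborFinset v).filter (fun u => key v < key u) with houtN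
  set badV : Finset V := Finset.univ.filter (fun v => ¬ good v) with hbadV
  -- local degree inequality for bad vertices
  have claimA : ∀ v : V, ¬ good v → 2 * (inN v).card < (outN v).card := by
    intro v hv
    have hsub : inN v ⊆ (H.neighborFinset v).filter
        (fun u => H.degree u ≤ H.degree v) := by
      intro u hu
      simp only [hinN, Finset.mem_filter] at hu ⊢
      exact ⟨hu.1, hkeydeg hu.2.le⟩
    have hc1 : (inN v).card ≤ ((H.neighborFinset v).filter
        (fun u => H.degree u ≤ H.degree v)).card := Finset.card_le_card hsub
    have hpart : (inN v).card + (outN v).card = H.degree v := by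
      have h2 : (H.neighborFinset v).filter (fun u => ¬ key u < key v) =
          (H.neighborFinset v).filter (fun u => key v < key u) := by
        apply Finset.filter_congr
        intro u hu
        have hadj : H.Adj v u := (SimpleGraph.mem_neighborFinset _ _ _).mp hu
        have hne : key u ≠ key v := fun h => H.ne_of_adj hadj (hinj h).symm
        constructor <;> intro h <;> omega
      simp only [hinN, houtN, ← h2,
        Finset.card_filter_add_card_filter_not]
      exact H.card_neighborFinset_eq_degree v
    simp only [hgood, not_le] at hv
    omega
  -- bad edges inject into (badV.sigma inN)
  have hB1 : B.card ≤ (badV.sigma inN).card := by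
    apply Finset.card_le_card_of_injOn
      (fun e => ⟨gvHd key hinj e, gvTl key hinj e⟩)
    · intro e he
      simp only [Finset.mem_coe, hB, Finset.mem_filter,
        SimpleGraph.mem_edgeFinset] at he
      obtain ⟨heE, hePne⟩ := he
      have hbadall : ∀ w ∈ e, ¬ good w := by
        intro w hw hgw
        exact hePne ⟨w, hw, hgw⟩
      have hadj : H.Adj (gvTl key hinj e) (gvHd key hinj e) := by
        have := gv_mk_tl_hd key hinj e
        rw [← SimpleGraph.mem_edgeSet, this]
        exact heE
      have hne : gvTl key hinj e ≠ gvHd key hinj e := H.ne_of_adj hadj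
      have hlt : key (gvTl key hinj e) < key (gvHd key hinj e) :=
        lt_of_le_of_ne (gv_key_tl_le key hinj e) (fun h => hne (hinj h))
      rw [Finset.mem_coe, Finset.mem_sigma]
      constructor
      · simp only [hbadV, Finset.mem_filter, Finset.mem_univ, true_and]
        exact hbadall _ (gv_hd_mem key hinj e)
      · simp only [hinN, Finset.mem_filter, SimpleGraph.mem_neighborFinset]
        exact ⟨hadj.symm, hlt⟩
    · intro e he e' he' heq
      have h1 : gvHd key hinj e = gvHd key hinj e' := congrArg Sigma.fst heq
      have h2 : gvTl key hinj e = gvTl key hinj e' := congrArg Sigma.snd heq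
      rw [← gv_mk_tl_hd key hinj e, ← gv_mk_tl_hd key hinj e', h1, h2]
  -- out-edges inject into edges
  have hB2 : ((Finset.univ : Finset V).sigma outN).card ≤ H.edgeFinset.card := by
    apply Finset.card_le_card_of_injOn (fun p => s(p.1, p.2))
    · intro p hp
      simp only [Finset.mem_coe, Finset.mem_sigma] at hp
      have := hp.2
      simp only [houtN, Finset.mem_filter, SimpleGraph.mem_neighborFinset] at this
      simpa [SimpleGraph.mem_edgeFinset, SimpleGraph.mem_edgeSet] using this.1
    · intro p hp q hq heq
      simp only [Finset.mem_coe, Finset.mem_sigma] at hp hq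
      have hp2 := hp.2; have hq2 := hq.2
      simp only [houtN, Finset.mem_filter, SimpleGraph.mem_neighborFinset] at hp2 hq2
      simp only [Sym2.eq_iff] at heq
      rcases heq with ⟨h1, h2⟩ | ⟨h1, h2⟩
      · exact Sigma.ext h1 (heq_of_eq h2)
      · exfalso
        have a := hp2.2
        have b := hq2.2
        rw [h1, h2] at a
        omega
  have hsum1 : (badV.sigma inN).card = ∑ v ∈ badV, (inN v).card :=
    Finset.card_sigma _ _
  have hsum2 : ((Finset.univ : Finset V).sigma outN).card
      = ∑ v ∈ Finset.univ, (outN v).card := Finset.card_sigma _ _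
  have hsum3 : ∑ v ∈ badV, (outN v).card ≤ ∑ v ∈ Finset.univ, (outN v).card :=
    Finset.sum_le_sum_of_subset (Finset.subset_univ _)
  have hsum4 : ∑ v ∈ badV, 2 * (inN v).card ≤ ∑ v ∈ badV, (outN v).card := by
    apply Finset.sum_le_sum
    intro v hv
    simp only [hbadV, Finset.mem_filter] at hv
    exact (claimA v hv.2).le
  have hmain : 2 * B.card ≤ H.edgeFinset.card := by
    calc 2 * B.card ≤ 2 * ∑ v ∈ badV, (inN v).card := by
          rw [← hsum1]; omega
      _ = ∑ v ∈ badV, 2 * (inN v).card := by rw [Finset.mul_sum]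
      _ ≤ ∑ v ∈ badV, (outN v).card := hsum4
      _ ≤ ∑ v ∈ Finset.univ, (outN v).card := hsum3
      _ = ((Finset.univ : Finset V).sigma outN).card := hsum2.symm
      _ ≤ H.edgeFinset.card := hB2
  -- translate to ncard
  have hlhs : H.edgeSet.ncard = H.edgeFinset.card := by
    rw [← SimpleGraph.coe_edgeFinset, Set.ncard_coe_finset]
  have hrhs : {e ∈ H.edgeSet | ∃ v, v ∈ e ∧
        H.degree v ≤ 3 * ((H.neighborFinset v).filter
          (fun u => H.degree u ≤ H.degree v)).card}.ncard = G.card := by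
    rw [← Set.ncard_coe_finset]
    congr 1
    ext e
    simp only [hG, Finset.coe_filter, Set.mem_setOf_eq,
      SimpleGraph.mem_edgeFinset, SimpleGraph.mem_edgeSet, hP, hgood]
  rw [hlhs, hrhs]
  omega
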